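/- arXiv:1902.01002 — 3 statements merged into one kernel-verified Lean document; each statement's English description precedes it below -/
import Mathlib

section
/- Let G be a strict episode and let H be a state (prefix subgraph) of the machine M(G). Then any two distinct outgoing edges of H in M(G) have distinct labels; that is, if (H, F₁) and (H, F₂) are edges of M(G) with the same label, then F₁ = F₂. -/
open scoped Classical

/-- An episode: a finite DAG with labelled vertices. -/
structure Episode (V A : Type*) where
  verts : Finset V
  edges : Finset (V × V)
  lab : V → A
  edges_sub : ∀ e ∈ edges, e.1 ∈ verts ∧ e.2 ∈ verts
  acyclic : ∀ v, ¬ Relation.TransGen (fun a b => (a, b) ∈ edges) v v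

namespace Episode

variable {V A : Type*} [DecidableEq V]

/-- A strict episode: any two distinct vertices sharing a label are connected. -/
def Strict (G : Episode V A) : Prop :=
  ∀ v ∈ G.verts, ∀ w ∈ G.verts, v ≠ w → G.lab v = G.lab w →
    (v, w) ∈ G.edges ∨ (w, v) ∈ G.edges

/-- `W` induces a prefix subgraph of `G`: it is closed under taking ancestors. -/
def IsPrefix (G : Episode V A) (W : Finset V) : Prop :=
  W ⊆ G.verts ∧ ∀ v ∈ W, ∀ w, (w, v) ∈ G.edges → w ∈ W

/-- Labelled edge of the machine `M(G)`: `(H, F)` is an edge with label `l` when `H` is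
obtained from `F` by deleting a single sink vertex of `F` labelled `l`
(states are identified with their vertex sets, as prefix subgraphs are induced). -/
def MachEdge (G : Episode V A) (H F : Finset V) (l : A) : Prop :=
  G.IsPrefix H ∧ G.IsPrefix F ∧
    ∃ x, x ∉ H ∧ F = insert x H ∧ G.lab x = l ∧ ∀ w ∈ F, (x, w) ∉ G.edges

/-- The set of (unlabelled) edges of the machine `M(G)`. -/
def MachineEdges (G : Episode V A) : Set (Finset V × Finset V) :=
  {e | ∃ l, G.MachEdge e.1 e.2 l}

/-- A sequence `S` covers an episode `G`. -/
def Covers (G : Episode V A) (S : List A) : Prop :=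
  ∃ m : V → ℕ, Set.InjOn m ↑G.verts ∧
    (∀ v ∈ G.verts, S[m v]? = some (G.lab v)) ∧
    ∀ e ∈ G.edges, m e.1 < m e.2

/-- The induced episode `G(W)`. -/
def induce (G : Episode V A) (W : Finset V) : Episode V A where
  verts := G.verts ∩ W
  edges := G.edges.filter fun e => e.1 ∈ W ∧ e.2 ∈ W
  lab := G.lab
  edges_sub := by
    intro e he
    rw [Finset.mem_filter] at he
    have h1 := G.edges_sub e he.1
    exact ⟨Finset.mem_inter.mpr ⟨h1.1, he.2.1⟩, Finset.mem_inter.mpr ⟨h1.2, he.2.2⟩⟩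
  acyclic := by
    intro v hv
    exact G.acyclic v
      (Relation.TransGen.mono (fun a b hab => (Finset.mem_filter.mp hab).1) v v hv)

/-- One greedy step of the machine `M(G)` from state `H` reading the symbol `s`:
follow the outgoing edge labelled `s` if there is one, otherwise stay. -/
noncomputable def greedyStep (G : Episode V A) (H : Finset V) (s : A) : Finset V :=
  if h : ∃ F, G.MachEdge H F s then h.choose else H

/-- The greedy state `g(M(G), S, H)`. -/
noncomputable def greedy (G : Episode V A) : Finset V → List A → Finset V
  | H, [] => H
  | H, s :: S => greedy G (G.greedyStep H s) S

/-- The edge set `block(W | G)` of the machine `M(G)`. -/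
def Block (G : Episode V A) (W : Finset V) : Set (Finset V × Finset V) :=
  {e | (∃ l, G.MachEdge e.1 e.2 l) ∧ (e.1 ∩ W).Nonempty ∧ e.2 \ e.1 ⊆ W}

/-- The states of the machine `M(G)`: all prefix subgraphs of `G`. -/
noncomputable def states (G : Episode V A) : Finset (Finset V) :=
  G.verts.powerset.filter fun X => G.IsPrefix X

/-- The number of positions `i` of `S` at which the machine is (greedily) in state `H`
and the symbol read is `l`. -/
noncomputable def countHL (G : Episode V A) (S : List A) (H : Finset V) (l : A) : ℕ :=
  ((Finset.range S.length).filter fun i => G.greedy ∅ (S.take i) = H ∧ S[i]? = some l).card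

section Prob

variable [Fintype A]

/-- `pInd G p H n`: probability that `n` i.i.d. symbols with distribution `p`
lead the machine greedily from the source state to `H`. -/
noncomputable def pInd (G : Episode V A) (p : A → ℝ) (H : Finset V) (n : ℕ) : ℝ :=
  ∑ f : Fin n → A, if G.greedy ∅ (List.ofFn f) = H then ∏ i, p (f i) else 0

/-- Unnormalized weight of label `l` at state `H` in the partition model. -/
noncomputable def pweight (G : Episode V A) (C₁ C₂ : Set (Finset V × Finset V))
    (u : A → ℝ) (t₁ t₂ : ℝ) (H : Finset V) (l : A) : ℝ :=
  if ∃ F, (H, F) ∈ C₁ ∧ G.MachEdge H F l then Real.exp (u l + t₁)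
  else if ∃ F, (H, F) ∈ C₂ ∧ G.MachEdge H F l then Real.exp (u l + t₂)
  else Real.exp (u l)

/-- Conditional probability `p(l | H)` of the partition model. -/
noncomputable def condP (G : Episode V A) (C₁ C₂ : Set (Finset V × Finset V))
    (u : A → ℝ) (t₁ t₂ : ℝ) (H : Finset V) (l : A) : ℝ :=
  G.pweight C₁ C₂ u t₁ t₂ H l / ∑ l' : A, G.pweight C₁ C₂ u t₁ t₂ H l'

/-- Probability of a sequence under the partition model, started from state `H`. -/
noncomputable def seqP (G : Episode V A) (C₁ C₂ : Set (Finset V × Finset V))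
    (u : A → ℝ) (t₁ t₂ : ℝ) : Finset V → List A → ℝ
  | _, [] => 1
  | H, s :: S => G.condP C₁ C₂ u t₁ t₂ H s * seqP G C₁ C₂ u t₁ t₂ (G.greedyStep H s) S

/-- `pPart G C₁ C₂ u t₁ t₂ H n`: probability under the partition model that a random
sequence of length `n` leads the machine greedily from the source state to `H`. -/
noncomputable def pPart (G : Episode V A) (C₁ C₂ : Set (Finset V × Finset V))
    (u : A → ℝ) (t₁ t₂ : ℝ) (H : Finset V) (n : ℕ) : ℝ :=
  ∑ f : Fin n → A,
    if G.greedy ∅ (List.ofFn f) = H then G.seqP C₁ C₂ u t₁ t₂ ∅ (List.ofFn f) else 0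

end Prob

/-- The transitive closure of an episode. -/
noncomputable def closure (G : Episode V A) : Episode V A where
  verts := G.verts
  edges := (G.verts ×ˢ G.verts).filter fun e =>
    Relation.TransGen (fun a b => (a, b) ∈ G.edges) e.1 e.2
  lab := G.lab
  edges_sub := by
    intro e he
    rw [Finset.mem_filter] at he
    exact Finset.mem_product.mp he.1
  acyclic := by
    intro v hv
    apply G.acyclic v
    rw [← Relation.transGen_idem (r := fun a b => (a, b) ∈ G.edges)]
    refine Relation.TransGen.mono ?_ v v hv
    intro a b hab
    exact (Finset.mem_filter.mp hab).2

end Episode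

/-- In the machine of a strict episode, any two distinct outgoing edges of a
state have distinct labels: two outgoing edges with the same label have the same target. -/
theorem Episode.machEdge_out_label_unique {V A : Type*} [DecidableEq V]
    (G : Episode V A) (hG : G.Strict) (H F₁ F₂ : Finset V) (l : A)
    (h₁ : G.MachEdge H F₁ l) (h₂ : G.MachEdge H F₂ l) : F₁ = F₂ := by
  obtain ⟨hH, hF₁, x₁, hx₁, rfl, hl₁, hs₁⟩ := h₁
  obtain ⟨-, hF₂, x₂, hx₂, rfl, hl₂, hs₂⟩ := h₂
  rcases eq_or_ne x₁ x₂ with rfl | hne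
  · rfl
  · exfalso
    have hv₁ : x₁ ∈ G.verts := hF₁.1 (Finset.mem_insert_self _ _)
    have hv₂ : x₂ ∈ G.verts := hF₂.1 (Finset.mem_insert_self _ _)
    rcases hG x₁ hv₁ x₂ hv₂ hne (hl₁.trans hl₂.symm) with he | he
    · have := hF₂.2 x₂ (Finset.mem_insert_self _ _) x₁ he
      rcases Finset.mem_insert.mp this with h | h
      · exact hne h
      · exact hx₁ h
    · have := hF₁.2 x₁ (Finset.mem_insert_self _ _) x₂ he
      rcases Finset.mem_insert.mp this with h | h
      · exact hne h.symm
      · exact hx₂ h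
end

section
/- Let G be a strict episode and let H be a state (prefix subgraph) of the machine M(G). Then any two distinct incoming edges of H in M(G) have distinct labels; that is, if (F₁, H) and (F₂, H) are edges of M(G) with the same label, then F₁ = F₂. -/
open scoped Classical

/-- In the machine of a strict episode, any two distinct incoming edges of a
state have distinct labels: two incoming edges with the same label have the same source. -/
theorem Episode.machEdge_in_label_unique {V A : Type*} [DecidableEq V]
    (G : Episode V A) (hG : G.Strict) (H F₁ F₂ : Finset V) (l : A)
    (h₁ : G.MachEdge F₁ H l) (h₂ : G.MachEdge F₂ H l) : F₁ = F₂ := by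
  obtain ⟨-, hH, x₁, hx₁, hHe₁, hl₁, hsink₁⟩ := h₁
  obtain ⟨-, -, x₂, hx₂, hHe₂, hl₂, hsink₂⟩ := h₂
  have hx₁H : x₁ ∈ H := hHe₁ ▸ Finset.mem_insert_self _ _
  have hx₂H : x₂ ∈ H := hHe₂ ▸ Finset.mem_insert_self _ _
  have hx : x₁ = x₂ := by
    by_contra hne
    rcases hG x₁ (hH.1 hx₁H) x₂ (hH.1 hx₂H) hne (hl₁.trans hl₂.symm) with h | h
    · exact hsink₁ x₂ hx₂H h
    · exact hsink₂ x₁ hx₁H h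
  subst hx
  have e1 : H.erase x₁ = F₁ := by rw [hHe₁, Finset.erase_insert hx₁]
  have e2 : H.erase x₁ = F₂ := by rw [hHe₂, Finset.erase_insert hx₂]
  rw [← e1, ← e2]
end

section
/- Let G be a strict episode with machine M = M(G). A sequence S over Σ covers the episode G if and only if S covers the sink state of M(G), i.e., if and only if there exists a subsequence T of S such that the greedy state g(M, T) (started from the source state G(∅)) equals G. -/
open scoped Classical

namespace Episode

variable {V A : Type*} [DecidableEq V]

lemma machEdge_unique {G : Episode V A} (hG : G.Strict) {H F₁ F₂ : Finset V} {l : A}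
    (h₁ : G.MachEdge H F₁ l) (h₂ : G.MachEdge H F₂ l) : F₁ = F₂ := by
  obtain ⟨hH, hF₁, x₁, hx₁H, rfl, hl₁, hs₁⟩ := h₁
  obtain ⟨-, hF₂, x₂, hx₂H, rfl, hl₂, hs₂⟩ := h₂
  rcases eq_or_ne x₁ x₂ with rfl | hne
  · rfl
  have hx₁v : x₁ ∈ G.verts := hF₁.1 (Finset.mem_insert_self _ _)
  have hx₂v : x₂ ∈ G.verts := hF₂.1 (Finset.mem_insert_self _ _)
  rcases hG x₁ hx₁v x₂ hx₂v hne (hl₁.trans hl₂.symm) with he | he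
  · have := hF₂.2 x₂ (Finset.mem_insert_self _ _) x₁ he
    rcases Finset.mem_insert.mp this with h | h
    · exact absurd h hne
    · exact absurd h hx₁H
  · have := hF₁.2 x₁ (Finset.mem_insert_self _ _) x₂ he
    rcases Finset.mem_insert.mp this with h | h
    · exact absurd h hne.symm
    · exact absurd h hx₂H

lemma greedyStep_spec (G : Episode V A) (H : Finset V) (s : A) :
    G.greedyStep H s = H ∨ G.MachEdge H (G.greedyStep H s) s := by
  unfold greedyStep
  split
  · next h => exact Or.inr h.choose_spec
  · exact Or.inl rfl

lemma greedyStep_eq {G : Episode V A} (hG : G.Strict) {H F : Finset V} {s : A}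
    (h : G.MachEdge H F s) : G.greedyStep H s = F := by
  rcases greedyStep_spec G H s with h' | h'
  · exfalso
    unfold greedyStep at h'
    rw [dif_pos ⟨F, h⟩] at h'
    have := machEdge_unique hG (Exists.choose_spec (⟨F, h⟩ : ∃ F, G.MachEdge H F s)) h
    rw [h'] at this
    obtain ⟨-, -, x, hx, hFx, -, -⟩ := h
    rw [← this] at hFx
    exact hx (hFx ▸ Finset.mem_insert_self x H)
  · exact machEdge_unique hG h' h

lemma subset_greedyStep (G : Episode V A) (H : Finset V) (s : A) : H ⊆ G.greedyStep H s := by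
  rcases greedyStep_spec G H s with h | h
  · rw [h]
  · obtain ⟨-, -, x, -, hF, -⟩ := h
    rw [hF]
    exact Finset.subset_insert _ _

lemma isPrefix_greedyStep {G : Episode V A} {H : Finset V} (hH : G.IsPrefix H) (s : A) :
    G.IsPrefix (G.greedyStep H s) := by
  rcases greedyStep_spec G H s with h | h
  · rwa [h]
  · exact h.2.1

@[simp] lemma greedy_nil (G : Episode V A) (H : Finset V) : G.greedy H [] = H := rfl

@[simp] lemma greedy_cons (G : Episode V A) (H : Finset V) (s : A) (T : List A) :
    G.greedy H (s :: T) = G.greedy (G.greedyStep H s) T := rfl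

lemma subset_greedy (G : Episode V A) (T : List A) (H : Finset V) : H ⊆ G.greedy H T := by
  induction T generalizing H with
  | nil => simp
  | cons s T ih =>
    rw [greedy_cons]
    exact (subset_greedyStep G H s).trans (ih _)

lemma greedy_chain {G : Episode V A} (hG : G.Strict) (m : V → ℕ)
    (hedge : ∀ e ∈ G.edges, m e.1 < m e.2) (L : List V) (H : Finset V)
    (hpre : G.IsPrefix H) (hunion : H ∪ L.toFinset = G.verts)
    (hdisj : ∀ v ∈ L, v ∉ H) (hpair : L.Pairwise (fun a b => m a < m b))
    (hdom : ∀ v ∈ H, ∀ w ∈ L, m v < m w) :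
    G.greedy H (L.map G.lab) = G.verts := by
  induction L generalizing H with
  | nil => simpa using hunion
  | cons v L ih =>
    have hvH : v ∉ H := hdisj v List.mem_cons_self
    have hvverts : v ∈ G.verts := by
      rw [← hunion]
      exact Finset.mem_union_right _ (by simp)
    obtain ⟨hhead, htail⟩ := List.pairwise_cons.mp hpair
    have hpre' : G.IsPrefix (insert v H) := by
      refine ⟨Finset.insert_subset hvverts hpre.1, ?_⟩
      intro a ha w hw
      rcases Finset.mem_insert.mp ha with rfl | haH
      · have hwv : w ∈ G.verts := (G.edges_sub _ hw).1
        have hmwa : m w < m a := hedge (w, a) hw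
        rw [← hunion] at hwv
        rcases Finset.mem_union.mp hwv with h | h
        · exact Finset.mem_insert_of_mem h
        · exfalso
          rcases List.mem_cons.mp (List.mem_toFinset.mp h) with h' | h'
          · subst h'; omega
          · have := hhead w h'
            omega
      · exact Finset.mem_insert_of_mem (hpre.2 a haH w hw)
    have hsink : ∀ w ∈ insert v H, (v, w) ∉ G.edges := by
      intro w hwmem hvw
      have hvw' : m v < m w := hedge (v, w) hvw
      rcases Finset.mem_insert.mp hwmem with rfl | hwH
      · omega
      · have := hdom w hwH v List.mem_cons_self
        omega
    have hme : G.MachEdge H (insert v H) (G.lab v) :=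
      ⟨hpre, hpre', v, hvH, rfl, rfl, hsink⟩
    rw [List.map_cons, greedy_cons, greedyStep_eq hG hme]
    apply ih (insert v H) hpre'
    · rw [← hunion, List.toFinset_cons]
      rw [Finset.insert_union, Finset.union_insert]
    · intro w hw
      have hmvw := hhead w hw
      simp only [Finset.mem_insert, not_or]
      exact ⟨fun h => by subst h; omega, hdisj w (List.mem_cons_of_mem _ hw)⟩
    · exact htail
    · intro a ha w hw
      rcases Finset.mem_insert.mp ha with rfl | haH
      · exact hhead w hw
      · exact hdom a haH w (List.mem_cons_of_mem _ hw)

lemma exists_sorted_list {G : Episode V A} (m : V → ℕ) (hinj : Set.InjOn m ↑G.verts)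
    (s : Finset V) (hs : s ⊆ G.verts) :
    ∃ L : List V, L.toFinset = s ∧ L.Pairwise (fun a b => m a < m b) := by
  induction s using Finset.strongInduction with
  | _ s ih =>
    rcases s.eq_empty_or_nonempty with rfl | hne
    · exact ⟨[], by simp, List.Pairwise.nil⟩
    · obtain ⟨v, hv, hmin⟩ := Finset.exists_min_image s m hne
      obtain ⟨L, hL1, hL2⟩ := ih (s.erase v) (Finset.erase_ssubset hv)
        ((Finset.erase_subset _ _).trans hs)
      refine ⟨v :: L, ?_, ?_⟩
      · rw [List.toFinset_cons, hL1, Finset.insert_erase hv]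
      · refine List.pairwise_cons.mpr ⟨?_, hL2⟩
        intro w hw
        have hw' : w ∈ s.erase v := by rw [← hL1]; exact List.mem_toFinset.mpr hw
        have hle := hmin w (Finset.mem_of_mem_erase hw')
        have hne' : v ≠ w := (Finset.ne_of_mem_erase hw').symm
        have : m v ≠ m w := fun h =>
          hne' (hinj (hs hv) (hs (Finset.mem_of_mem_erase hw')) h)
        omega

lemma map_sublist_of_getElem {A' V' : Type*} (lab : V' → A') (L : List V') (S : List A')
    (idx : V' → ℕ) (hpair : L.Pairwise (fun a b => idx a < idx b))
    (hget : ∀ v ∈ L, S[idx v]? = some (lab v)) :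
    (L.map lab).Sublist S := by
  induction L generalizing S idx with
  | nil => simp
  | cons v L ih =>
    obtain ⟨hhead, htail⟩ := List.pairwise_cons.mp hpair
    have hv := hget v List.mem_cons_self
    have hlt : idx v < S.length := by
      by_contra h
      rw [List.getElem?_eq_none (by omega)] at hv
      exact nomatch hv
    have h1 : lab v ∈ S.take (idx v + 1) := by
      apply List.mem_of_getElem? (i := idx v) (l := S.take (idx v + 1))
      rw [List.getElem?_take, if_pos (Nat.lt_succ_self _)]
      exact hv
    have h2 : (L.map lab).Sublist (S.drop (idx v + 1)) := by
      apply ih (S.drop (idx v + 1)) (fun w => idx w - (idx v + 1))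
      · refine htail.imp_of_mem ?_
        intro a b ha hb hab
        have := hhead a ha
        omega
      · intro w hw
        have hvw := hhead w hw
        rw [List.getElem?_drop]
        have : idx v + 1 + (idx w - (idx v + 1)) = idx w := by omega
        rw [this]
        exact hget w (List.mem_cons_of_mem _ hw)
    have h3 := List.Sublist.append (List.singleton_sublist.mpr h1) h2
    rw [List.take_append_drop] at h3
    simpa using h3

lemma exists_strictMono_of_sublist {A' : Type*} {T S : List A'} (h : T.Sublist S) :
    ∃ f : ℕ → ℕ, StrictMono f ∧ ∀ i < T.length, S[f i]? = T[i]? := by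
  induction h with
  | slnil => exact ⟨id, strictMono_id, by simp⟩
  | cons a h ih =>
    obtain ⟨f, hf, hg⟩ := ih
    refine ⟨fun i => f i + 1, fun i j hij => by simpa using hf hij, fun i hi => ?_⟩
    rw [List.getElem?_cons_succ]
    exact hg i hi
  | cons_cons a h ih =>
    obtain ⟨f, hf, hg⟩ := ih
    refine ⟨fun i => match i with | 0 => 0 | j+1 => f j + 1, ?_, ?_⟩
    · intro i j hij
      cases i with
      | zero =>
        cases j with
        | zero => omega
        | succ k => exact Nat.succ_pos _
      | succ l =>
        cases j with
        | zero => omega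
        | succ k => exact Nat.succ_lt_succ (hf (by omega))
    · intro i hi
      cases i with
      | zero => simp
      | succ j =>
        rw [List.getElem?_cons_succ, List.getElem?_cons_succ]
        exact hg j (by simpa using hi)

lemma covers_of_greedy {G : Episode V A} (T : List A) (H : Finset V) (hH : G.IsPrefix H) :
    ∃ m : V → ℕ, Set.InjOn m ↑(G.greedy H T \ H) ∧
      (∀ v ∈ G.greedy H T \ H, T[m v]? = some (G.lab v)) ∧
      (∀ e ∈ G.edges, e.1 ∈ G.greedy H T \ H → e.2 ∈ G.greedy H T \ H → m e.1 < m e.2) := by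
  induction T generalizing H with
  | nil =>
    refine ⟨fun _ => 0, ?_, ?_, ?_⟩ <;> simp
  | cons s T ih =>
    rw [greedy_cons]
    rcases greedyStep_spec G H s with heq | hme
    · rw [heq]
      obtain ⟨m, hinj, hlab, hedg⟩ := ih H hH
      refine ⟨fun v => m v + 1, ?_, ?_, ?_⟩
      · intro a ha b hb hab
        have hab' : m a + 1 = m b + 1 := hab
        exact hinj ha hb (by omega)
      · intro v hv
        show (s :: T)[m v + 1]? = some (G.lab v)
        rw [List.getElem?_cons_succ]
        exact hlab v hv
      · intro e he h1 h2
        have := hedg e he h1 h2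
        show m e.1 + 1 < m e.2 + 1
        omega
    · obtain ⟨-, hpre', x, hxH, hF, hlabx, hsink⟩ := hme
      obtain ⟨m, hinj, hlab, hedg⟩ := ih (G.greedyStep H s) hpre'
      set K := G.greedy (G.greedyStep H s) T with hK
      have hxK : x ∈ K := (subset_greedy G T _) (hF ▸ Finset.mem_insert_self x H)
      have hmem : ∀ v, v ∈ K \ H ↔ v = x ∨ v ∈ K \ G.greedyStep H s := by
        intro v
        rw [hF]
        simp only [Finset.mem_sdiff, Finset.mem_insert, not_or]
        constructor
        · rintro ⟨hvK, hvH⟩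
          rcases eq_or_ne v x with rfl | hvx
          · exact Or.inl rfl
          · exact Or.inr ⟨hvK, hvx, hvH⟩
        · rintro (rfl | ⟨hvK, hvx, hvH⟩)
          · exact ⟨hxK, hxH⟩
          · exact ⟨hvK, hvH⟩
      refine ⟨fun v => if v = x then 0 else m v + 1, ?_, ?_, ?_⟩
      · intro a ha b hb hab
        simp only at hab
        by_cases hax : a = x <;> by_cases hbx : b = x
        · rw [hax, hbx]
        · rw [if_pos hax, if_neg hbx] at hab; omega
        · rw [if_neg hax, if_pos hbx] at hab; omega
        · rw [if_neg hax, if_neg hbx] at hab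
          have ha' := (hmem a).mp (Finset.mem_coe.mp ha)
          have hb' := (hmem b).mp (Finset.mem_coe.mp hb)
          rcases ha' with h | ha' ; · exact absurd h hax
          rcases hb' with h | hb' ; · exact absurd h hbx
          exact hinj (Finset.mem_coe.mpr ha') (Finset.mem_coe.mpr hb') (by omega)
      · intro v hv
        rcases (hmem v).mp hv with hvx | hv'
        · subst hvx
          simp [hlabx]
        · have hvx : v ≠ x := by
            rintro rfl
            rw [hF] at hv'
            exact (Finset.mem_sdiff.mp hv').2 (Finset.mem_insert_self v H)
          show (s :: T)[if v = x then 0 else m v + 1]? = some (G.lab v)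
          rw [if_neg hvx, List.getElem?_cons_succ]
          exact hlab v hv'
      · rintro ⟨a, b⟩ he h1 h2
        simp only at h1 h2 ⊢
        have h1' := (hmem a).mp h1
        have h2' := (hmem b).mp h2
        have hxstep : x ∈ G.greedyStep H s := by
          rw [hF]; exact Finset.mem_insert_self x H
        rcases h2' with h2x | h2'
        · -- edge into x : impossible
          exfalso
          subst h2x
          have hx1 : a ∈ G.greedyStep H s := hpre'.2 b hxstep a he
          rcases h1' with h1x | h1'
          · subst h1x
            exact G.acyclic a (Relation.TransGen.single he)
          · exact (Finset.mem_sdiff.mp h1').2 hx1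
        · have h2x : b ≠ x := by
            rintro rfl
            exact (Finset.mem_sdiff.mp h2').2 hxstep
          rcases h1' with h1x | h1'
          · rw [if_pos h1x, if_neg h2x]
            omega
          · have h1x : a ≠ x := by
              rintro rfl
              exact (Finset.mem_sdiff.mp h1').2 hxstep
            rw [if_neg h1x, if_neg h2x]
            have := hedg (a, b) he h1' h2'
            simp only at this
            omega

lemma isPrefix_empty (G : Episode V A) : G.IsPrefix ∅ :=
  ⟨Finset.empty_subset _, by simp⟩

end Episode

/-- A sequence covers a strict episode `G` iff it covers the sink state of the
machine `M(G)`, i.e. iff some subsequence leads greedily from the source state to `G`. -/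
theorem Episode.covers_iff_covers_sink {V A : Type*} [DecidableEq V]
    (G : Episode V A) (hG : G.Strict) (S : List A) :
    G.Covers S ↔ ∃ T : List A, T.Sublist S ∧ G.greedy ∅ T = G.verts := by
  constructor
  · rintro ⟨m, hinj, hlab, hedge⟩
    have hedge' : ∀ e ∈ G.edges, m e.1 < m e.2 := hedge
    obtain ⟨L, hL1, hL2⟩ := Episode.exists_sorted_list m hinj G.verts subset_rfl
    refine ⟨L.map G.lab, ?_, ?_⟩
    · exact Episode.map_sublist_of_getElem G.lab L S m hL2
        (fun v hv => hlab v (hL1 ▸ List.mem_toFinset.mpr hv))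
    · exact Episode.greedy_chain hG m hedge' L ∅ (G.isPrefix_empty)
        (by rw [hL1]; simp) (by simp) hL2 (by simp)
  · rintro ⟨T, hsub, hT⟩
    obtain ⟨m, hinj, hlab, hedge⟩ := Episode.covers_of_greedy T ∅ G.isPrefix_empty
    rw [hT, Finset.sdiff_empty] at hinj hlab hedge
    obtain ⟨f, hf, hfg⟩ := Episode.exists_strictMono_of_sublist hsub
    refine ⟨f ∘ m, ?_, ?_, ?_⟩
    · intro a ha b hb hab
      exact hinj ha hb (hf.injective hab)
    · intro v hv
      have h1 := hlab v hv
      have hmv : m v < T.length := by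
        by_contra h
        rw [List.getElem?_eq_none (by omega)] at h1
        exact nomatch h1
      rw [Function.comp_apply, hfg (m v) hmv, h1]
    · intro e he
      have h1 := (G.edges_sub e he).1
      have h2 := (G.edges_sub e he).2
      exact hf (hedge e he h1 h2)
end
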